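/- arXiv:2105.04238 — 9 statements merged into one kernel-verified Lean document; each statement's English description precedes it below -/
import Mathlib

section
/- Let c, x1, x2, x3, y, z be complex numbers with y ≠ 0, z ≠ 0, x1*x2 + x3*z + 1 ≠ 0 and x1*x3 + x2*z + 1 ≠ 0, and set ỹ = ((x1*x2 + x3*z + 1)/(x1*x3 + x2*z + 1)) * y. Then K(x1, x2, y) * K(y, x3, z) = K(x1, x3, ỹ) * K(ỹ, x2, z) * ((x1*x2 + x3*z + 1)/(x1*x3 + x2*z + 1)), where K(a, b, w) = exp(c*(a*b*w + w))/w. (The last factor is dỹ/dy, so K(x1,x2,y)K(y,x3,z) dy = K(x1,x3,ỹ)K(ỹ,x2,z) dỹ.) -/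
/-- The multiplication kernel of Example 2.2.1: `K(a,b,w) = exp(c(abw + w))/w`. -/
noncomputable def kernEx221 (c a b w : ℂ) : ℂ := Complex.exp (c * (a * b * w + w)) / w

theorem ex221_associativity (c x1 x2 x3 y z : ℂ)
    (hy : y ≠ 0) (hz : z ≠ 0)
    (h1 : x1 * x2 + x3 * z + 1 ≠ 0) (h2 : x1 * x3 + x2 * z + 1 ≠ 0) :
    kernEx221 c x1 x2 y * kernEx221 c y x3 z =
      kernEx221 c x1 x3 ((x1 * x2 + x3 * z + 1) / (x1 * x3 + x2 * z + 1) * y) *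
        kernEx221 c ((x1 * x2 + x3 * z + 1) / (x1 * x3 + x2 * z + 1) * y) x2 z *
        ((x1 * x2 + x3 * z + 1) / (x1 * x3 + x2 * z + 1)) := by
  have hA : x1 * x2 + x3 * z + 1 ≠ 0 := h1
  have hB : x1 * x3 + x2 * z + 1 ≠ 0 := h2
  have hyt : (x1 * x2 + x3 * z + 1) / (x1 * x3 + x2 * z + 1) * y ≠ 0 :=
    mul_ne_zero (div_ne_zero hA hB) hy
  unfold kernEx221
  rw [div_mul_div_comm, div_mul_div_comm, div_mul_eq_mul_div, ← Complex.exp_add,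
    ← Complex.exp_add]
  have hexp : c * (x1 * x2 * y + y) + c * (y * x3 * z + z) =
      c * (x1 * x3 * ((x1 * x2 + x3 * z + 1) / (x1 * x3 + x2 * z + 1) * y) +
        (x1 * x2 + x3 * z + 1) / (x1 * x3 + x2 * z + 1) * y) +
      c * ((x1 * x2 + x3 * z + 1) / (x1 * x3 + x2 * z + 1) * y * x2 * z + z) := by
    field_simp
    ring
  rw [hexp]
  rw [div_eq_div_iff (mul_ne_zero hy hz) (mul_ne_zero hyt hz)]
  ring_nf
end

section
/- Let c, x1, x2, x3, y, z be complex numbers with x1, x2, x3, y, z all nonzero and x1*x3 + x2*z ≠ 0, x1*x2 + x3*z ≠ 0, and set ỹ = ((x1*x2 + x3*z)/(x1*x3 + x2*z)) * y. Then K(x1, x2, y) * K(y, x3, z) = K(x1, x3, ỹ) * K(ỹ, x2, z) * ((x1*x2 + x3*z)/(x1*x3 + x2*z)), where K(a, b, w) = exp(c*(a*b*w + a/(b*w) + b/(a*w) + w/(a*b)))/w. -/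
set_option maxHeartbeats 1000000

/-- The multiplication kernel of Example 2.2.2:
`K(a,b,w) = exp(c(abw + a/(bw) + b/(aw) + w/(ab)))/w`. -/
noncomputable def kernEx222 (c a b w : ℂ) : ℂ :=
  Complex.exp (c * (a * b * w + a / (b * w) + b / (a * w) + w / (a * b))) / w

theorem ex222_associativity (c x1 x2 x3 y z : ℂ)
    (hx1 : x1 ≠ 0) (hx2 : x2 ≠ 0) (hx3 : x3 ≠ 0) (hy : y ≠ 0) (hz : z ≠ 0)
    (h1 : x1 * x3 + x2 * z ≠ 0) (h2 : x1 * x2 + x3 * z ≠ 0) :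
    kernEx222 c x1 x2 y * kernEx222 c y x3 z =
      kernEx222 c x1 x3 ((x1 * x2 + x3 * z) / (x1 * x3 + x2 * z) * y) *
        kernEx222 c ((x1 * x2 + x3 * z) / (x1 * x3 + x2 * z) * y) x2 z *
        ((x1 * x2 + x3 * z) / (x1 * x3 + x2 * z)) := by
  have key : ∀ a b : ℂ, a = x1 * x2 + x3 * z → b = x1 * x3 + x2 * z → a ≠ 0 → b ≠ 0 →
      c * (x1 * x2 * y + x1 / (x2 * y) + x2 / (x1 * y) + y / (x1 * x2)) +
        c * (y * x3 * z + y / (x3 * z) + x3 / (y * z) + z / (y * x3)) =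
      c * (x1 * x3 * (a / b * y) + x1 / (x3 * (a / b * y)) + x3 / (x1 * (a / b * y)) +
            a / b * y / (x1 * x3)) +
        c * (a / b * y * x2 * z + a / b * y / (x2 * z) + x2 / (a / b * y * z) +
            z / (a / b * y * x2)) := by
    intro a b hA hB ha hb
    have P1 : x1 * x2 * y + y * x3 * z = x1 * x3 * (a / b * y) + a / b * y * x2 * z := by
      field_simp
      rw [hA, hB]
    have P2 : x1 / (x2 * y) + z / (y * x3) = x1 / (x3 * (a / b * y)) + z / (a / b * y * x2) := by
      field_simp
      rw [hA, hB]; ring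
    have P3 : x2 / (x1 * y) + x3 / (y * z) = x3 / (x1 * (a / b * y)) + x2 / (a / b * y * z) := by
      field_simp
      rw [hA, hB]; ring
    have P4 : y / (x1 * x2) + y / (x3 * z) = a / b * y / (x1 * x3) + a / b * y / (x2 * z) := by
      field_simp
      rw [hA, hB]; ring
    linear_combination c * P1 + c * P2 + c * P3 + c * P4
  have hr : (x1 * x2 + x3 * z) / (x1 * x3 + x2 * z) ≠ 0 := div_ne_zero h2 h1
  have hry : (x1 * x2 + x3 * z) / (x1 * x3 + x2 * z) * y ≠ 0 := mul_ne_zero hr hy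
  unfold kernEx222
  rw [div_mul_div_comm, div_mul_div_comm, ← Complex.exp_add, ← Complex.exp_add,
    key _ _ rfl rfl h2 h1]
  rw [div_mul_eq_mul_div]
  generalize Complex.exp _ = E
  field_simp
  rw [mul_assoc, mul_div_cancel_right₀ _ (by rw [mul_comm z x3, mul_comm z x2]; exact mul_ne_zero h2 h1)]
end

section
/- Let c, x1, x2, x3, x4, x5, y, z be complex numbers with y ≠ 0, z ≠ 0, x1*x2*x3 + x4*x5*z + 1 ≠ 0 and x1*x2*x4 + x3*x5*z + 1 ≠ 0, and set ỹ = ((x1*x2*x3 + x4*x5*z + 1)/(x1*x2*x4 + x3*x5*z + 1)) * y. Then K(x1, x2, x3, y) * K(y, x4, x5, z) = K(x1, x2, x4, ỹ) * K(ỹ, x3, x5, z) * ((x1*x2*x3 + x4*x5*z + 1)/(x1*x2*x4 + x3*x5*z + 1)), where K(a, b, d, w) = exp(c*(a*b*d*w + w))/w. -/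
/-- The three-input kernel of Example 2.5.1: `K(a,b,d,w) = exp(c(abdw + w))/w`. -/
noncomputable def kernEx251 (c a b d w : ℂ) : ℂ := Complex.exp (c * (a * b * d * w + w)) / w

theorem ex251_associativity (c x1 x2 x3 x4 x5 y z : ℂ)
    (hy : y ≠ 0) (hz : z ≠ 0)
    (h1 : x1 * x2 * x3 + x4 * x5 * z + 1 ≠ 0) (h2 : x1 * x2 * x4 + x3 * x5 * z + 1 ≠ 0) :
    kernEx251 c x1 x2 x3 y * kernEx251 c y x4 x5 z =
      kernEx251 c x1 x2 x4
          ((x1 * x2 * x3 + x4 * x5 * z + 1) / (x1 * x2 * x4 + x3 * x5 * z + 1) * y) *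
        kernEx251 c ((x1 * x2 * x3 + x4 * x5 * z + 1) / (x1 * x2 * x4 + x3 * x5 * z + 1) * y)
          x3 x5 z *
        ((x1 * x2 * x3 + x4 * x5 * z + 1) / (x1 * x2 * x4 + x3 * x5 * z + 1)) := by
  set A := x1 * x2 * x3 + x4 * x5 * z + 1 with hA
  set B := x1 * x2 * x4 + x3 * x5 * z + 1 with hB
  have hr : A / B ≠ 0 := div_ne_zero h1 h2
  have hty : A / B * y ≠ 0 := mul_ne_zero hr hy
  unfold kernEx251
  rw [div_mul_div_comm, div_mul_div_comm, ← Complex.exp_add, ← Complex.exp_add]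
  have key : c * (x1 * x2 * x3 * y + y) + c * (y * x4 * x5 * z + z) =
      c * (x1 * x2 * x4 * (A / B * y) + A / B * y) + c * (A / B * y * x3 * x5 * z + z) := by
    field_simp
    ring
  rw [key]
  field_simp
end

section
/- Let x1, x2, x3, x4, x5, z, y, w123, w45 be complex numbers satisfying w123^2 = 1 + x1*x2*x3*y and w45^2 = 1 + y*x4*x5*z, and assume x1*x2*x3 - x4*x5*z ≠ 0. Define w124 = ((x1*x2 - x5*z)*x4*w123 + (x3 - x4)*x1*x2*w45)/(x1*x2*x3 - x4*x5*z), w35 = ((x3 - x4)*x5*z*w123 + (x1*x2 - x5*z)*x3*w45)/(x1*x2*x3 - x4*x5*z), and ỹ = (2*(x3 - x4)*(x1*x2 - x5*z)*(w123*w45 - 1) + x3*x4*(x1*x2 - x5*z)^2*y + x1*x2*x5*z*(x3 - x4)^2*y)/(x1*x2*x3 - x4*x5*z)^2. Then w124^2 = 1 + x1*x2*x4*ỹ and w35^2 = 1 + ỹ*x3*x5*z. -/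
/-- Example 2.5.2: the birational map `(y, w123, w45) ↦ (ỹ, w124, w35)` sends points of the
curve `C1` (given by `w123² = 1 + x1x2x3y`, `w45² = 1 + y x4x5z`) to points of the curve `C2`
(given by `w124² = 1 + x1x2x4 ỹ`, `w35² = 1 + ỹ x3x5z`). -/
theorem ex252_birational_map (x1 x2 x3 x4 x5 z y w123 w45 : ℂ)
    (h123 : w123 ^ 2 = 1 + x1 * x2 * x3 * y)
    (h45 : w45 ^ 2 = 1 + y * x4 * x5 * z)
    (hden : x1 * x2 * x3 - x4 * x5 * z ≠ 0) :
    (((x1 * x2 - x5 * z) * x4 * w123 + (x3 - x4) * x1 * x2 * w45) /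
          (x1 * x2 * x3 - x4 * x5 * z)) ^ 2 =
        1 + x1 * x2 * x4 *
          ((2 * (x3 - x4) * (x1 * x2 - x5 * z) * (w123 * w45 - 1) +
              x3 * x4 * (x1 * x2 - x5 * z) ^ 2 * y +
              x1 * x2 * x5 * z * (x3 - x4) ^ 2 * y) /
            (x1 * x2 * x3 - x4 * x5 * z) ^ 2) ∧
      (((x3 - x4) * x5 * z * w123 + (x1 * x2 - x5 * z) * x3 * w45) /
          (x1 * x2 * x3 - x4 * x5 * z)) ^ 2 =
        1 + ((2 * (x3 - x4) * (x1 * x2 - x5 * z) * (w123 * w45 - 1) +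
              x3 * x4 * (x1 * x2 - x5 * z) ^ 2 * y +
              x1 * x2 * x5 * z * (x3 - x4) ^ 2 * y) /
            (x1 * x2 * x3 - x4 * x5 * z) ^ 2) * x3 * x5 * z := by
  have hd1 : x1 * x2 * x3 - x5 * z * x4 ≠ 0 := by intro h; apply hden; linear_combination h
  have hd2 : x3 * x1 * x2 - x4 * x5 * z ≠ 0 := by intro h; apply hden; linear_combination h
  constructor
  · field_simp
    linear_combination ((x1*x2-x5*z)*x4)^2*(x1 * x2 * x3 - x4 * x5 * z)^0*h123 + ((x3-x4)*x1*x2)^2*h45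
  · field_simp
    linear_combination ((x3-x4)*x5*z)^2*h123 + ((x1*x2-x5*z)*x3)^2*h45
end

section
/- Fix real numbers x1, x2, x3, x4, x5, z with x1*x2*x3 - x4*x5*z ≠ 0, and let I ⊆ ℝ be an open interval on which there are differentiable functions w123(y), w45(y) with w123(y)^2 = 1 + x1*x2*x3*y, w45(y)^2 = 1 + y*x4*x5*z, and w123(y) ≠ 0, w45(y) ≠ 0 for all y ∈ I. Define ỹ(y) = (2*(x3 - x4)*(x1*x2 - x5*z)*(w123(y)*w45(y) - 1) + x3*x4*(x1*x2 - x5*z)^2*y + x1*x2*x5*z*(x3 - x4)^2*y)/(x1*x2*x3 - x4*x5*z)^2, w124(y) = ((x1*x2 - x5*z)*x4*w123(y) + (x3 - x4)*x1*x2*w45(y))/(x1*x2*x3 - x4*x5*z), and w35(y) = ((x3 - x4)*x5*z*w123(y) + (x1*x2 - x5*z)*x3*w45(y))/(x1*x2*x3 - x4*x5*z). Then for every y ∈ I, the derivative of ỹ satisfies ỹ'(y) = (w124(y)*w35(y))/(w123(y)*w45(y)). -/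
/-- Example 2.5.2: the Jacobian identity `dỹ/dy = (w124·w35)/(w123·w45)` along the curve,
coming from comparing the `c`-independent factors of the associativity identity. -/
theorem ex252_jacobian (x1 x2 x3 x4 x5 z : ℝ)
    (hden : x1 * x2 * x3 - x4 * x5 * z ≠ 0)
    (a b : ℝ) (w123 w45 : ℝ → ℝ)
    (hw123diff : ∀ y ∈ Set.Ioo a b, DifferentiableAt ℝ w123 y)
    (hw45diff : ∀ y ∈ Set.Ioo a b, DifferentiableAt ℝ w45 y)
    (h123 : ∀ y ∈ Set.Ioo a b, (w123 y) ^ 2 = 1 + x1 * x2 * x3 * y)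
    (h45 : ∀ y ∈ Set.Ioo a b, (w45 y) ^ 2 = 1 + y * x4 * x5 * z)
    (h123ne : ∀ y ∈ Set.Ioo a b, w123 y ≠ 0)
    (h45ne : ∀ y ∈ Set.Ioo a b, w45 y ≠ 0) :
    ∀ y ∈ Set.Ioo a b,
      deriv (fun y' =>
          (2 * (x3 - x4) * (x1 * x2 - x5 * z) * (w123 y' * w45 y' - 1) +
              x3 * x4 * (x1 * x2 - x5 * z) ^ 2 * y' +
              x1 * x2 * x5 * z * (x3 - x4) ^ 2 * y') /
            (x1 * x2 * x3 - x4 * x5 * z) ^ 2) y =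
        (((x1 * x2 - x5 * z) * x4 * w123 y + (x3 - x4) * x1 * x2 * w45 y) /
            (x1 * x2 * x3 - x4 * x5 * z) *
          (((x3 - x4) * x5 * z * w123 y + (x1 * x2 - x5 * z) * x3 * w45 y) /
            (x1 * x2 * x3 - x4 * x5 * z))) /
        (w123 y * w45 y) := by
  intro y hy
  have hmem : Set.Ioo a b ∈ nhds y := isOpen_Ioo.mem_nhds hy
  have hd1 : HasDerivAt w123 (deriv w123 y) y := (hw123diff y hy).hasDerivAt
  have hd2 : HasDerivAt w45 (deriv w45 y) y := (hw45diff y hy).hasDerivAt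
  -- derivative relation for w123
  have e1 : (2 : ℝ) * w123 y * deriv w123 y = x1 * x2 * x3 := by
    have heq : (fun y' => (w123 y') ^ 2) =ᶠ[nhds y]
        (fun y' => 1 + x1 * x2 * x3 * y') := Filter.eventuallyEq_of_mem hmem h123
    have h1 : deriv (fun y' => (w123 y') ^ 2) y = x1 * x2 * x3 := by
      rw [heq.deriv_eq]
      have : HasDerivAt (fun y' : ℝ => 1 + x1 * x2 * x3 * y') (x1 * x2 * x3) y := by
        simpa using ((hasDerivAt_id y).const_mul (x1 * x2 * x3)).const_add 1
      exact this.deriv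
    have h2 := (hd1.pow 2).deriv
    rw [show (w123 ^ 2) = (fun y' => (w123 y') ^ 2) from rfl, h1] at h2
    push_cast at h2
    linarith [h2]
  have e2 : (2 : ℝ) * w45 y * deriv w45 y = x4 * x5 * z := by
    have heq : (fun y' => (w45 y') ^ 2) =ᶠ[nhds y]
        (fun y' => 1 + y' * (x4 * x5 * z)) := by
      refine Filter.eventuallyEq_of_mem hmem (fun t ht => ?_)
      rw [h45 t ht]; ring
    have h1 : deriv (fun y' => (w45 y') ^ 2) y = x4 * x5 * z := by
      rw [heq.deriv_eq]
      have : HasDerivAt (fun y' : ℝ => 1 + y' * (x4 * x5 * z)) (x4 * x5 * z) y := by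
        simpa using ((hasDerivAt_id y).mul_const (x4 * x5 * z)).const_add 1
      exact this.deriv
    have h2 := (hd2.pow 2).deriv
    rw [show (w45 ^ 2) = (fun y' => (w45 y') ^ 2) from rfl, h1] at h2
    push_cast at h2
    linarith [h2]
  -- derivative of the main function
  have hmain : HasDerivAt (fun y' =>
      (2 * (x3 - x4) * (x1 * x2 - x5 * z) * (w123 y' * w45 y' - 1) +
          x3 * x4 * (x1 * x2 - x5 * z) ^ 2 * y' +
          x1 * x2 * x5 * z * (x3 - x4) ^ 2 * y') /
        (x1 * x2 * x3 - x4 * x5 * z) ^ 2)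
      ((2 * (x3 - x4) * (x1 * x2 - x5 * z) *
          (deriv w123 y * w45 y + w123 y * deriv w45 y) +
          x3 * x4 * (x1 * x2 - x5 * z) ^ 2 +
          x1 * x2 * x5 * z * (x3 - x4) ^ 2) /
        (x1 * x2 * x3 - x4 * x5 * z) ^ 2) y := by
    have h0 : HasDerivAt (fun y' =>
        2 * (x3 - x4) * (x1 * x2 - x5 * z) * (w123 y' * w45 y' - 1) +
          x3 * x4 * (x1 * x2 - x5 * z) ^ 2 * y' +
          x1 * x2 * x5 * z * (x3 - x4) ^ 2 * y')
        (2 * (x3 - x4) * (x1 * x2 - x5 * z) *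
            (deriv w123 y * w45 y + w123 y * deriv w45 y) +
          x3 * x4 * (x1 * x2 - x5 * z) ^ 2 +
          x1 * x2 * x5 * z * (x3 - x4) ^ 2) y := by
      have ha := ((hd1.mul hd2).sub_const 1).const_mul
        (2 * (x3 - x4) * (x1 * x2 - x5 * z))
      have hb := (hasDerivAt_id y).const_mul (x3 * x4 * (x1 * x2 - x5 * z) ^ 2)
      have hc := (hasDerivAt_id y).const_mul (x1 * x2 * x5 * z * (x3 - x4) ^ 2)
      exact ((ha.add hb).add hc).congr_deriv (by ring)
    exact h0.div_const _
  rw [hmain.deriv]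
  have hw1 : w123 y ≠ 0 := h123ne y hy
  have hw2 : w45 y ≠ 0 := h45ne y hy
  field_simp
  congr 1
  linear_combination ((x3 - x4) * (x1 * x2 - x5 * z) *
      w45 y * w45 y) * e1 +
    ((x3 - x4) * (x1 * x2 - x5 * z) *
      w123 y * w123 y) * e2
end

section
/- Let n ≥ 1 be a natural number. For natural numbers a, b, c, write T(a,b,c) for the condition: a ≤ b + c, b ≤ a + c, c ≤ a + b, and a + b + c ≤ 2n. Then for all a, b, c, d ∈ {0, 1, ..., n}, the number of j ∈ {0, 1, ..., n} with T(a,b,j) and T(j,c,d) equals the number of j ∈ {0, 1, ..., n} with T(a,c,j) and T(j,b,d). Consequently, the ℚ-algebra A_n with basis e_0, ..., e_n and product e_a · e_b = Σ_c [T(a,b,c)] e_c is commutative and associative. -/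
/-- The tetrahedron condition of Section 1.5, in integer indices at level `n`:
`T n a b c` holds iff `a ≤ b + c`, `b ≤ a + c`, `c ≤ a + b` and `a + b + c ≤ 2n`. -/
def tetra (n a b c : ℕ) : Prop :=
  a ≤ b + c ∧ b ≤ a + c ∧ c ≤ a + b ∧ a + b + c ≤ 2 * n

instance (n a b c : ℕ) : Decidable (tetra n a b c) := by
  unfold tetra; infer_instance

/-- The product of the algebra `A_n = ℚ^{n+1}` with `e_a · e_b = Σ_c [tetra n a b c] e_c`. -/
def verlindeMul (n : ℕ) (f g : Fin (n + 1) → ℚ) : Fin (n + 1) → ℚ :=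
  fun c => ∑ a : Fin (n + 1), ∑ b : Fin (n + 1),
    f a * g b * (if tetra n (a : ℕ) (b : ℕ) (c : ℕ) then 1 else 0)

lemma vh_arith (n a b c d u1 v1 u2 v2 : ℕ)
    (ha : a ≤ n) (hb : b ≤ n) (hc : c ≤ n) (hd : d ≤ n)
    (hu1a : a ≤ u1 + b) (hu1b : b ≤ u1 + a) (hu1c : c ≤ u1 + d) (hu1d : d ≤ u1 + c)
    (hu1e : u1 + b = a ∨ u1 + a = b ∨ u1 + d = c ∨ u1 + c = d)
    (hv1a : v1 ≤ a + b) (hv1b : v1 ≤ c + d) (hv1c : v1 + a + b ≤ 2*n) (hv1d : v1 + c + d ≤ 2*n)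
    (hv1e : v1 = a + b ∨ v1 = c + d ∨ v1 + a + b = 2*n ∨ v1 + c + d = 2*n)
    (hu2a : a ≤ u2 + c) (hu2b : c ≤ u2 + a) (hu2c : b ≤ u2 + d) (hu2d : d ≤ u2 + b)
    (hu2e : u2 + c = a ∨ u2 + a = c ∨ u2 + d = b ∨ u2 + b = d)
    (hv2a : v2 ≤ a + c) (hv2b : v2 ≤ b + d) (hv2c : v2 + a + c ≤ 2*n) (hv2d : v2 + b + d ≤ 2*n)
    (hv2e : v2 = a + c ∨ v2 = b + d ∨ v2 + a + c = 2*n ∨ v2 + b + d = 2*n) :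
    v1 + 1 - u1 = v2 + 1 - u2 := by
  omega

lemma vh_filter_eq_Icc (n a b c d : ℕ) (ha : a ≤ n) (hb : b ≤ n) (hc : c ≤ n) (hd : d ≤ n) :
    ((Finset.range (n + 1)).filter (fun j => tetra n a b j ∧ tetra n j c d)) =
      Finset.Icc (max (a-b) (max (b-a) (max (c-d) (d-c))))
        (min (a+b) (min (c+d) (min (2*n-a-b) (2*n-c-d)))) := by
  ext j
  rw [Finset.mem_filter]
  simp only [Finset.mem_filter, Finset.mem_range, Finset.mem_Icc, tetra]
  omega

lemma vh_key (n a b c d : ℕ) (ha : a ≤ n) (hb : b ≤ n) (hc : c ≤ n) (hd : d ≤ n) :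
    ((Finset.range (n + 1)).filter (fun j => tetra n a b j ∧ tetra n j c d)).card =
      ((Finset.range (n + 1)).filter (fun j => tetra n a c j ∧ tetra n j b d)).card := by
  rw [vh_filter_eq_Icc n a b c d ha hb hc hd, vh_filter_eq_Icc n a c b d ha hc hb hd,
    Nat.card_Icc, Nat.card_Icc]
  apply vh_arith n a b c d <;> try omega

def vhS (n : ℕ) (a b c d : Fin (n + 1)) : ℚ :=
  ∑ j : Fin (n + 1), if tetra n a b j ∧ tetra n (j : ℕ) c d then 1 else 0

lemma vhS_swap (n : ℕ) (a b c d : Fin (n + 1)) : vhS n a b c d = vhS n a c b d := by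
  unfold vhS
  rw [Fin.sum_univ_eq_sum_range (fun j => if tetra n a b j ∧ tetra n j c d then (1:ℚ) else 0),
    Fin.sum_univ_eq_sum_range (fun j => if tetra n a c j ∧ tetra n j b d then (1:ℚ) else 0),
    Finset.sum_boole, Finset.sum_boole,
    vh_key n a b c d a.is_le b.is_le c.is_le d.is_le]

lemma vhS_comm (n : ℕ) (a b c d : Fin (n + 1)) : vhS n a b c d = vhS n b a c d := by
  unfold vhS
  refine Finset.sum_congr rfl fun j _ => if_congr ?_ rfl rfl
  unfold tetra
  omega

lemma vhS_key (n : ℕ) (a b c d : Fin (n + 1)) : vhS n a b c d = vhS n b c a d := by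
  rw [vhS_swap, vhS_comm, vhS_swap, vhS_comm]

lemma vh_ite_mul {P Q : Prop} [Decidable P] [Decidable Q] :
    (if P then (1:ℚ) else 0) * (if Q then 1 else 0) = if P ∧ Q then 1 else 0 := by
  by_cases hP : P <;> by_cases hQ : Q <;> simp [hP, hQ]

lemma vh_sum4 {α β γ δ M : Type*} [Fintype α] [Fintype β] [Fintype γ] [Fintype δ]
    [AddCommMonoid M] (F : α → β → γ → δ → M) :
    ∑ x : α, ∑ y : β, ∑ a : γ, ∑ b : δ, F x y a b
      = ∑ a : γ, ∑ b : δ, ∑ y : β, ∑ x : α, F x y a b := by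
  calc ∑ x : α, ∑ y : β, ∑ a : γ, ∑ b : δ, F x y a b
      = ∑ p : α × β × γ × δ, F p.1 p.2.1 p.2.2.1 p.2.2.2 := by
        simp only [Fintype.sum_prod_type]
    _ = ∑ p : γ × δ × β × α, F p.2.2.2 p.2.2.1 p.1 p.2.1 :=
        Fintype.sum_equiv ⟨fun p => (p.2.2.1, p.2.2.2, p.2.1, p.1),
          fun p => (p.2.2.2, p.2.2.1, p.1, p.2.1), fun p => rfl, fun p => rfl⟩ _ _
          (fun p => rfl)
    _ = _ := by simp only [Fintype.sum_prod_type]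

lemma vh_sum3 {α β γ M : Type*} [Fintype α] [Fintype β] [Fintype γ]
    [AddCommMonoid M] (F : α → β → γ → M) :
    ∑ x : α, ∑ b : β, ∑ y : γ, F x b y = ∑ b : β, ∑ y : γ, ∑ x : α, F x b y := by
  calc ∑ x : α, ∑ b : β, ∑ y : γ, F x b y
      = ∑ p : α × β × γ, F p.1 p.2.1 p.2.2 := by simp only [Fintype.sum_prod_type]
    _ = ∑ p : β × γ × α, F p.2.2 p.1 p.2.1 := Fintype.sum_equiv ⟨fun p => (p.2.1, p.2.2, p.1),
          fun p => (p.2.2, p.1, p.2.1), fun p => rfl, fun p => rfl⟩ _ _ (fun p => rfl)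
    _ = _ := by simp only [Fintype.sum_prod_type]

theorem verlinde_assoc (n : ℕ) (hn : 1 ≤ n) :
    (∀ a b c d : ℕ, a ≤ n → b ≤ n → c ≤ n → d ≤ n →
      ((Finset.range (n + 1)).filter (fun j => tetra n a b j ∧ tetra n j c d)).card =
        ((Finset.range (n + 1)).filter (fun j => tetra n a c j ∧ tetra n j b d)).card) ∧
    (∀ f g : Fin (n + 1) → ℚ, verlindeMul n f g = verlindeMul n g f) ∧
    (∀ f g h : Fin (n + 1) → ℚ,
      verlindeMul n (verlindeMul n f g) h = verlindeMul n f (verlindeMul n g h)) := by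
  refine ⟨fun a b c d ha hb hc hd => vh_key n a b c d ha hb hc hd, ?_, ?_⟩
  · intro f g
    funext c
    unfold verlindeMul
    rw [Finset.sum_comm]
    refine Finset.sum_congr rfl fun b _ => Finset.sum_congr rfl fun a _ => ?_
    have ht : tetra n a b c ↔ tetra n b a c := by unfold tetra; omega
    simp only [ht]
    ring
  · intro f g h
    funext d
    unfold verlindeMul
    simp only [Finset.sum_mul, Finset.mul_sum]
    rw [vh_sum4]
    refine Finset.sum_congr rfl fun a _ => ?_
    conv_rhs => rw [vh_sum3]
    refine Finset.sum_congr rfl fun b _ => Finset.sum_congr rfl fun y _ => ?_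
    have htax : ∀ x : Fin (n+1), tetra n (a:ℕ) x d ↔ tetra n (x:ℕ) a d := by
      intro x; unfold tetra; omega
    calc ∑ x : Fin (n+1), f a * g b * (if tetra n a b x then (1:ℚ) else 0) * h y
          * (if tetra n (x:ℕ) y d then 1 else 0)
        = f a * g b * h y * vhS n a b y d := by
          rw [vhS, Finset.mul_sum]
          refine Finset.sum_congr rfl fun x _ => ?_
          rw [← vh_ite_mul]
          ring
      _ = f a * g b * h y * vhS n b y a d := by rw [vhS_key]
      _ = ∑ x : Fin (n+1), f a * (g b * h y * (if tetra n (b:ℕ) y x then (1:ℚ) else 0))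
          * (if tetra n (a:ℕ) x d then 1 else 0) := by
          rw [vhS, Finset.mul_sum]
          refine Finset.sum_congr rfl fun x _ => ?_
          rw [← vh_ite_mul]
          simp only [htax x]
          ring
end

section
/- Let T = {(x,y,z) ∈ [0,1]^3 : x ≤ y + z, y ≤ x + z, z ≤ x + y, x + y + z ≤ 2} be the closed tetrahedron with vertices (0,0,0), (0,1,1), (1,0,1), (1,1,0). Then for all x1, x2, x3, x4 ∈ [0,1], the one-dimensional Lebesgue measure of the set {y ∈ [0,1] : (x1,x2,y) ∈ T and (y,x3,x4) ∈ T} equals the one-dimensional Lebesgue measure of the set {y ∈ [0,1] : (x1,x3,y) ∈ T and (y,x2,x4) ∈ T}. -/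
open MeasureTheory

/-- Membership in the closed tetrahedron `T ⊆ [0,1]³` with vertices
`(0,0,0), (0,1,1), (1,0,1), (1,1,0)`. -/
def memTetra (x y z : ℝ) : Prop :=
  x ∈ Set.Icc (0:ℝ) 1 ∧ y ∈ Set.Icc (0:ℝ) 1 ∧ z ∈ Set.Icc (0:ℝ) 1 ∧
    x ≤ y + z ∧ y ≤ x + z ∧ z ≤ x + y ∧ x + y + z ≤ 2

lemma sub_max' (x a b : ℝ) : x - max a b = min (x - a) (x - b) := by
  rcases max_cases a b with ⟨h,h'⟩|⟨h,h'⟩ <;> rw [h]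
  · exact (min_eq_left (by linarith)).symm
  · exact (min_eq_right (by linarith)).symm

lemma sub_abs' (x v : ℝ) : x - |v| = min (x - v) (x + v) := by
  rw [abs_eq_max_neg, sub_max', sub_neg_eq_add]

lemma key (a b c d : ℝ) :
    min (min (a+b) (2-(a+b))) (min (c+d) (2-(c+d))) - max |a-b| |c-d|
  = min (min (a+c) (2-(a+c))) (min (b+d) (2-(b+d))) - max |a-c| |b-d| := by
  rw [sub_max', sub_max', ← min_sub_sub_right, ← min_sub_sub_right,
    ← min_sub_sub_right, ← min_sub_sub_right, ← min_sub_sub_right, ← min_sub_sub_right,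
    ← min_sub_sub_right, ← min_sub_sub_right, ← min_sub_sub_right, ← min_sub_sub_right,
    ← min_sub_sub_right, ← min_sub_sub_right]
  simp only [sub_abs']
  ring_nf
  ac_rfl

lemma fiber_eq (x1 x2 x3 x4 : ℝ)
    (h1 : x1 ∈ Set.Icc (0:ℝ) 1) (h2 : x2 ∈ Set.Icc (0:ℝ) 1)
    (h3 : x3 ∈ Set.Icc (0:ℝ) 1) (h4 : x4 ∈ Set.Icc (0:ℝ) 1) :
    {y : ℝ | y ∈ Set.Icc (0:ℝ) 1 ∧ memTetra x1 x2 y ∧ memTetra y x3 x4} =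
      Set.Icc (max |x1-x2| |x3-x4|)
        (min (min (x1+x2) (2-(x1+x2))) (min (x3+x4) (2-(x3+x4)))) := by
  obtain ⟨a1, b1⟩ := h1
  obtain ⟨a2, b2⟩ := h2
  obtain ⟨a3, b3⟩ := h3
  obtain ⟨a4, b4⟩ := h4
  ext y
  simp only [Set.mem_setOf_eq, Set.mem_Icc, memTetra, max_le_iff, le_min_iff,
    abs_sub_le_iff]
  constructor
  · rintro ⟨⟨hy0, hy1⟩, ⟨_, _, _, p1, p2, p3, p4⟩, ⟨_, _, _, q1, q2, q3, q4⟩⟩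
    exact ⟨⟨⟨by linarith, by linarith⟩, ⟨by linarith, by linarith⟩⟩,
      ⟨by linarith, by linarith⟩, ⟨by linarith, by linarith⟩⟩
  · rintro ⟨⟨⟨l1, l2⟩, ⟨l3, l4⟩⟩, ⟨u1, u2⟩, ⟨u3, u4⟩⟩
    exact ⟨⟨by linarith, by linarith⟩,
      ⟨⟨a1, b1⟩, ⟨a2, b2⟩, ⟨by linarith, by linarith⟩,
        by linarith, by linarith, by linarith, by linarith⟩,
      ⟨⟨by linarith, by linarith⟩, ⟨a3, b3⟩, ⟨a4, b4⟩,
        by linarith, by linarith, by linarith, by linarith⟩⟩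

/-- Section 1.5: the fibers of the two 5-dimensional polytopes `P1`, `P2` over a point
`(x1,x2,x3,x4) ∈ [0,1]⁴` have the same one-dimensional Lebesgue measure. -/
theorem tetra_fiber_lengths_equal (x1 x2 x3 x4 : ℝ)
    (h1 : x1 ∈ Set.Icc (0:ℝ) 1) (h2 : x2 ∈ Set.Icc (0:ℝ) 1)
    (h3 : x3 ∈ Set.Icc (0:ℝ) 1) (h4 : x4 ∈ Set.Icc (0:ℝ) 1) :
    volume {y : ℝ | y ∈ Set.Icc (0:ℝ) 1 ∧ memTetra x1 x2 y ∧ memTetra y x3 x4} =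
      volume {y : ℝ | y ∈ Set.Icc (0:ℝ) 1 ∧ memTetra x1 x3 y ∧ memTetra y x2 x4} := by
  rw [fiber_eq x1 x2 x3 x4 h1 h2 h3 h4, fiber_eq x1 x3 x2 x4 h1 h3 h2 h4,
    Real.volume_Icc, Real.volume_Icc]
  exact congrArg ENNReal.ofReal (by rw [key x1 x2 x3 x4])
end

section
/- Let s, t ∈ ℝ with t ≠ 0 and t ≠ 1, and let F : ℝ × ℝ → ℝ be differentiable. For positive, pairwise distinct real numbers x1, x2, x3, define u = t^2 (x1-1)(x2-1)(x3-1) / ((t-1)^2 x1 x2 x3), v = (x1-t)(x2-t)(x3-t) / ((t-1)^2 x1 x2 x3), and K(x1,x2,x3) = (x1 x2 x3)^s · F(u, v). Then K satisfies the first-order partial differential equation L K = 0, i.e. [x1(x1-1)(x1-t)/((x1-x2)(x1-x3))] ∂K/∂x1 + [x2(x2-1)(x2-t)/((x2-x1)(x2-x3))] ∂K/∂x2 + [x3(x3-1)(x3-t)/((x3-x1)(x3-x2))] ∂K/∂x3 = s · K. -/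
set_option maxHeartbeats 2000000


/-- The kernel `K(x1,x2,x3) = (x1 x2 x3)^s F(u,v)` of Theorem 3.3.2, with
`u = t²(x1-1)(x2-1)(x3-1)/((t-1)² x1 x2 x3)` and `v = (x1-t)(x2-t)(x3-t)/((t-1)² x1 x2 x3)`. -/
noncomputable def kernHitchin4 (s t : ℝ) (F : ℝ × ℝ → ℝ) (x1 x2 x3 : ℝ) : ℝ :=
  (x1 * x2 * x3) ^ s *
    F (t ^ 2 * (x1 - 1) * (x2 - 1) * (x3 - 1) / ((t - 1) ^ 2 * (x1 * x2 * x3)),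
       (x1 - t) * (x2 - t) * (x3 - t) / ((t - 1) ^ 2 * (x1 * x2 * x3)))

/-- Theorem 3.3.2 (proof): `K = (x1x2x3)^s F(u,v)` satisfies `L K = 0` for arbitrary
differentiable `F`, where `L` is the first-order operator of the quantized Hitchin system. -/
theorem kernHitchin4_LK_eq_zero (s t : ℝ) (ht0 : t ≠ 0) (ht1 : t ≠ 1)
    (F : ℝ × ℝ → ℝ) (hF : Differentiable ℝ F) :
    ∀ x1 x2 x3 : ℝ, 0 < x1 → 0 < x2 → 0 < x3 →
      x1 ≠ x2 → x1 ≠ x3 → x2 ≠ x3 →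
      x1 * (x1 - 1) * (x1 - t) / ((x1 - x2) * (x1 - x3)) *
          deriv (fun x => kernHitchin4 s t F x x2 x3) x1 +
        x2 * (x2 - 1) * (x2 - t) / ((x2 - x1) * (x2 - x3)) *
          deriv (fun x => kernHitchin4 s t F x1 x x3) x2 +
        x3 * (x3 - 1) * (x3 - t) / ((x3 - x1) * (x3 - x2)) *
          deriv (fun x => kernHitchin4 s t F x1 x2 x) x3 =
      s * kernHitchin4 s t F x1 x2 x3 := by
  intro x1 x2 x3 hx1 hx2 hx3 h12 h13 h23
  have hP : x1 * x2 * x3 ≠ 0 := by positivity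
  have ht1' : t - 1 ≠ 0 := sub_ne_zero.mpr ht1
  have hD : (t - 1) ^ 2 * (x1 * x2 * x3) ≠ 0 := mul_ne_zero (pow_ne_zero 2 ht1') hP
  have e12 : x1 - x2 ≠ 0 := sub_ne_zero.mpr h12
  have e13 : x1 - x3 ≠ 0 := sub_ne_zero.mpr h13
  have e23 : x2 - x3 ≠ 0 := sub_ne_zero.mpr h23
  have e21 : x2 - x1 ≠ 0 := sub_ne_zero.mpr h12.symm
  have e31 : x3 - x1 ≠ 0 := sub_ne_zero.mpr h13.symm
  have e32 : x3 - x2 ≠ 0 := sub_ne_zero.mpr h23.symm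
  have hx1' : x1 ≠ 0 := hx1.ne'
  have hx2' : x2 ≠ 0 := hx2.ne'
  have hx3' : x3 ≠ 0 := hx3.ne'
  simp only [kernHitchin4]
  set φ := fderiv ℝ F
    (t ^ 2 * (x1 - 1) * (x2 - 1) * (x3 - 1) / ((t - 1) ^ 2 * (x1 * x2 * x3)),
     (x1 - t) * (x2 - t) * (x3 - t) / ((t - 1) ^ 2 * (x1 * x2 * x3))) with hφdef
  -- slot 1 derivatives
  have hden1 : HasDerivAt (fun x => (t - 1) ^ 2 * (x * x2 * x3))
      ((t - 1) ^ 2 * (1 * x2 * x3)) x1 :=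
    (((hasDerivAt_id' x1).mul_const x2).mul_const x3).const_mul _
  have hu1 : HasDerivAt
      (fun x => t ^ 2 * (x - 1) * (x2 - 1) * (x3 - 1) / ((t - 1) ^ 2 * (x * x2 * x3)))
      ((t ^ 2 * 1 * (x2 - 1) * (x3 - 1) * ((t - 1) ^ 2 * (x1 * x2 * x3)) -
        t ^ 2 * (x1 - 1) * (x2 - 1) * (x3 - 1) * ((t - 1) ^ 2 * (1 * x2 * x3))) /
        ((t - 1) ^ 2 * (x1 * x2 * x3)) ^ 2) x1 :=
    (((((hasDerivAt_id' x1).sub_const 1).const_mul (t ^ 2)).mul_const (x2 - 1)).mul_const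
      (x3 - 1)).div hden1 hD
  have hv1 : HasDerivAt
      (fun x => (x - t) * (x2 - t) * (x3 - t) / ((t - 1) ^ 2 * (x * x2 * x3)))
      ((1 * (x2 - t) * (x3 - t) * ((t - 1) ^ 2 * (x1 * x2 * x3)) -
        (x1 - t) * (x2 - t) * (x3 - t) * ((t - 1) ^ 2 * (1 * x2 * x3))) /
        ((t - 1) ^ 2 * (x1 * x2 * x3)) ^ 2) x1 :=
    ((((hasDerivAt_id' x1).sub_const t).mul_const (x2 - t)).mul_const (x3 - t)).div hden1 hD
  have hb1 : HasDerivAt (fun x => (x * x2 * x3) ^ s)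
      (1 * x2 * x3 * s * (x1 * x2 * x3) ^ (s - 1)) x1 :=
    (((hasDerivAt_id' x1).mul_const x2).mul_const x3).rpow_const (Or.inl hP)
  have h1 : HasDerivAt
      (fun x => (x * x2 * x3) ^ s *
        F (t ^ 2 * (x - 1) * (x2 - 1) * (x3 - 1) / ((t - 1) ^ 2 * (x * x2 * x3)),
           (x - t) * (x2 - t) * (x3 - t) / ((t - 1) ^ 2 * (x * x2 * x3))))
      (1 * x2 * x3 * s * (x1 * x2 * x3) ^ (s - 1) *
        F (t ^ 2 * (x1 - 1) * (x2 - 1) * (x3 - 1) / ((t - 1) ^ 2 * (x1 * x2 * x3)),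
           (x1 - t) * (x2 - t) * (x3 - t) / ((t - 1) ^ 2 * (x1 * x2 * x3))) +
       (x1 * x2 * x3) ^ s *
        φ ((t ^ 2 * 1 * (x2 - 1) * (x3 - 1) * ((t - 1) ^ 2 * (x1 * x2 * x3)) -
            t ^ 2 * (x1 - 1) * (x2 - 1) * (x3 - 1) * ((t - 1) ^ 2 * (1 * x2 * x3))) /
            ((t - 1) ^ 2 * (x1 * x2 * x3)) ^ 2,
           (1 * (x2 - t) * (x3 - t) * ((t - 1) ^ 2 * (x1 * x2 * x3)) -
            (x1 - t) * (x2 - t) * (x3 - t) * ((t - 1) ^ 2 * (1 * x2 * x3))) /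
            ((t - 1) ^ 2 * (x1 * x2 * x3)) ^ 2)) x1 :=
    hb1.mul ((hF _).hasFDerivAt.comp_hasDerivAt x1 (HasDerivAt.prodMk hu1 hv1))
  -- slot 2 derivatives
  have hden2 : HasDerivAt (fun x => (t - 1) ^ 2 * (x1 * x * x3))
      ((t - 1) ^ 2 * (x1 * 1 * x3)) x2 :=
    ((((hasDerivAt_id' x2).const_mul x1).mul_const x3)).const_mul _
  have hu2 : HasDerivAt
      (fun x => t ^ 2 * (x1 - 1) * (x - 1) * (x3 - 1) / ((t - 1) ^ 2 * (x1 * x * x3)))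
      ((t ^ 2 * (x1 - 1) * 1 * (x3 - 1) * ((t - 1) ^ 2 * (x1 * x2 * x3)) -
        t ^ 2 * (x1 - 1) * (x2 - 1) * (x3 - 1) * ((t - 1) ^ 2 * (x1 * 1 * x3))) /
        ((t - 1) ^ 2 * (x1 * x2 * x3)) ^ 2) x2 :=
    ((((hasDerivAt_id' x2).sub_const 1).const_mul (t ^ 2 * (x1 - 1))).mul_const
      (x3 - 1)).div hden2 hD
  have hv2 : HasDerivAt
      (fun x => (x1 - t) * (x - t) * (x3 - t) / ((t - 1) ^ 2 * (x1 * x * x3)))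
      (((x1 - t) * 1 * (x3 - t) * ((t - 1) ^ 2 * (x1 * x2 * x3)) -
        (x1 - t) * (x2 - t) * (x3 - t) * ((t - 1) ^ 2 * (x1 * 1 * x3))) /
        ((t - 1) ^ 2 * (x1 * x2 * x3)) ^ 2) x2 :=
    ((((hasDerivAt_id' x2).sub_const t).const_mul (x1 - t)).mul_const (x3 - t)).div hden2 hD
  have hb2 : HasDerivAt (fun x => (x1 * x * x3) ^ s)
      (x1 * 1 * x3 * s * (x1 * x2 * x3) ^ (s - 1)) x2 :=
    (((hasDerivAt_id' x2).const_mul x1).mul_const x3).rpow_const (Or.inl hP)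
  have h2 : HasDerivAt
      (fun x => (x1 * x * x3) ^ s *
        F (t ^ 2 * (x1 - 1) * (x - 1) * (x3 - 1) / ((t - 1) ^ 2 * (x1 * x * x3)),
           (x1 - t) * (x - t) * (x3 - t) / ((t - 1) ^ 2 * (x1 * x * x3))))
      (x1 * 1 * x3 * s * (x1 * x2 * x3) ^ (s - 1) *
        F (t ^ 2 * (x1 - 1) * (x2 - 1) * (x3 - 1) / ((t - 1) ^ 2 * (x1 * x2 * x3)),
           (x1 - t) * (x2 - t) * (x3 - t) / ((t - 1) ^ 2 * (x1 * x2 * x3))) +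
       (x1 * x2 * x3) ^ s *
        φ ((t ^ 2 * (x1 - 1) * 1 * (x3 - 1) * ((t - 1) ^ 2 * (x1 * x2 * x3)) -
            t ^ 2 * (x1 - 1) * (x2 - 1) * (x3 - 1) * ((t - 1) ^ 2 * (x1 * 1 * x3))) /
            ((t - 1) ^ 2 * (x1 * x2 * x3)) ^ 2,
           ((x1 - t) * 1 * (x3 - t) * ((t - 1) ^ 2 * (x1 * x2 * x3)) -
            (x1 - t) * (x2 - t) * (x3 - t) * ((t - 1) ^ 2 * (x1 * 1 * x3))) /
            ((t - 1) ^ 2 * (x1 * x2 * x3)) ^ 2)) x2 :=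
    hb2.mul ((hF _).hasFDerivAt.comp_hasDerivAt x2 (HasDerivAt.prodMk hu2 hv2))
  -- slot 3 derivatives
  have hden3 : HasDerivAt (fun x => (t - 1) ^ 2 * (x1 * x2 * x))
      ((t - 1) ^ 2 * (x1 * x2 * 1)) x3 :=
    (((hasDerivAt_id' x3).const_mul (x1 * x2))).const_mul _
  have hu3 : HasDerivAt
      (fun x => t ^ 2 * (x1 - 1) * (x2 - 1) * (x - 1) / ((t - 1) ^ 2 * (x1 * x2 * x)))
      ((t ^ 2 * (x1 - 1) * (x2 - 1) * 1 * ((t - 1) ^ 2 * (x1 * x2 * x3)) -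
        t ^ 2 * (x1 - 1) * (x2 - 1) * (x3 - 1) * ((t - 1) ^ 2 * (x1 * x2 * 1))) /
        ((t - 1) ^ 2 * (x1 * x2 * x3)) ^ 2) x3 :=
    (((hasDerivAt_id' x3).sub_const 1).const_mul (t ^ 2 * (x1 - 1) * (x2 - 1))).div hden3 hD
  have hv3 : HasDerivAt
      (fun x => (x1 - t) * (x2 - t) * (x - t) / ((t - 1) ^ 2 * (x1 * x2 * x)))
      (((x1 - t) * (x2 - t) * 1 * ((t - 1) ^ 2 * (x1 * x2 * x3)) -
        (x1 - t) * (x2 - t) * (x3 - t) * ((t - 1) ^ 2 * (x1 * x2 * 1))) /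
        ((t - 1) ^ 2 * (x1 * x2 * x3)) ^ 2) x3 :=
    (((hasDerivAt_id' x3).sub_const t).const_mul ((x1 - t) * (x2 - t))).div hden3 hD
  have hb3 : HasDerivAt (fun x => (x1 * x2 * x) ^ s)
      (x1 * x2 * 1 * s * (x1 * x2 * x3) ^ (s - 1)) x3 :=
    ((hasDerivAt_id' x3).const_mul (x1 * x2)).rpow_const (Or.inl hP)
  have h3 : HasDerivAt
      (fun x => (x1 * x2 * x) ^ s *
        F (t ^ 2 * (x1 - 1) * (x2 - 1) * (x - 1) / ((t - 1) ^ 2 * (x1 * x2 * x)),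
           (x1 - t) * (x2 - t) * (x - t) / ((t - 1) ^ 2 * (x1 * x2 * x))))
      (x1 * x2 * 1 * s * (x1 * x2 * x3) ^ (s - 1) *
        F (t ^ 2 * (x1 - 1) * (x2 - 1) * (x3 - 1) / ((t - 1) ^ 2 * (x1 * x2 * x3)),
           (x1 - t) * (x2 - t) * (x3 - t) / ((t - 1) ^ 2 * (x1 * x2 * x3))) +
       (x1 * x2 * x3) ^ s *
        φ ((t ^ 2 * (x1 - 1) * (x2 - 1) * 1 * ((t - 1) ^ 2 * (x1 * x2 * x3)) -
            t ^ 2 * (x1 - 1) * (x2 - 1) * (x3 - 1) * ((t - 1) ^ 2 * (x1 * x2 * 1))) /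
            ((t - 1) ^ 2 * (x1 * x2 * x3)) ^ 2,
           ((x1 - t) * (x2 - t) * 1 * ((t - 1) ^ 2 * (x1 * x2 * x3)) -
            (x1 - t) * (x2 - t) * (x3 - t) * ((t - 1) ^ 2 * (x1 * x2 * 1))) /
            ((t - 1) ^ 2 * (x1 * x2 * x3)) ^ 2)) x3 :=
    hb3.mul ((hF _).hasFDerivAt.comp_hasDerivAt x3 (HasDerivAt.prodMk hu3 hv3))
  rw [h1.deriv, h2.deriv, h3.deriv]
  -- the Lagrange-interpolation identity ∑ cᵢ/xᵢ = 1 (cleared of denominators)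
  have key1 : x1 * (x1 - 1) * (x1 - t) / ((x1 - x2) * (x1 - x3)) * (x2 * x3) +
      x2 * (x2 - 1) * (x2 - t) / ((x2 - x1) * (x2 - x3)) * (x1 * x3) +
      x3 * (x3 - 1) * (x3 - t) / ((x3 - x1) * (x3 - x2)) * (x1 * x2) = x1 * x2 * x3 := by
    field_simp
    ring
  -- the vector of (u,v)-derivatives is annihilated by the operator coefficients
  have hA : x1 * (x1 - 1) * (x1 - t) / ((x1 - x2) * (x1 - x3)) *
        ((t ^ 2 * 1 * (x2 - 1) * (x3 - 1) * ((t - 1) ^ 2 * (x1 * x2 * x3)) -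
          t ^ 2 * (x1 - 1) * (x2 - 1) * (x3 - 1) * ((t - 1) ^ 2 * (1 * x2 * x3))) /
          ((t - 1) ^ 2 * (x1 * x2 * x3)) ^ 2) +
      x2 * (x2 - 1) * (x2 - t) / ((x2 - x1) * (x2 - x3)) *
        ((t ^ 2 * (x1 - 1) * 1 * (x3 - 1) * ((t - 1) ^ 2 * (x1 * x2 * x3)) -
          t ^ 2 * (x1 - 1) * (x2 - 1) * (x3 - 1) * ((t - 1) ^ 2 * (x1 * 1 * x3))) /
          ((t - 1) ^ 2 * (x1 * x2 * x3)) ^ 2) +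
      x3 * (x3 - 1) * (x3 - t) / ((x3 - x1) * (x3 - x2)) *
        ((t ^ 2 * (x1 - 1) * (x2 - 1) * 1 * ((t - 1) ^ 2 * (x1 * x2 * x3)) -
          t ^ 2 * (x1 - 1) * (x2 - 1) * (x3 - 1) * ((t - 1) ^ 2 * (x1 * x2 * 1))) /
          ((t - 1) ^ 2 * (x1 * x2 * x3)) ^ 2) = 0 := by
    field_simp
    ring
  have hB : x1 * (x1 - 1) * (x1 - t) / ((x1 - x2) * (x1 - x3)) *
        ((1 * (x2 - t) * (x3 - t) * ((t - 1) ^ 2 * (x1 * x2 * x3)) -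
          (x1 - t) * (x2 - t) * (x3 - t) * ((t - 1) ^ 2 * (1 * x2 * x3))) /
          ((t - 1) ^ 2 * (x1 * x2 * x3)) ^ 2) +
      x2 * (x2 - 1) * (x2 - t) / ((x2 - x1) * (x2 - x3)) *
        (((x1 - t) * 1 * (x3 - t) * ((t - 1) ^ 2 * (x1 * x2 * x3)) -
          (x1 - t) * (x2 - t) * (x3 - t) * ((t - 1) ^ 2 * (x1 * 1 * x3))) /
          ((t - 1) ^ 2 * (x1 * x2 * x3)) ^ 2) +
      x3 * (x3 - 1) * (x3 - t) / ((x3 - x1) * (x3 - x2)) *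
        (((x1 - t) * (x2 - t) * 1 * ((t - 1) ^ 2 * (x1 * x2 * x3)) -
          (x1 - t) * (x2 - t) * (x3 - t) * ((t - 1) ^ 2 * (x1 * x2 * 1))) /
          ((t - 1) ^ 2 * (x1 * x2 * x3)) ^ 2) = 0 := by
    field_simp
    ring
  have hvec : (x1 * (x1 - 1) * (x1 - t) / ((x1 - x2) * (x1 - x3))) •
        (((t ^ 2 * 1 * (x2 - 1) * (x3 - 1) * ((t - 1) ^ 2 * (x1 * x2 * x3)) -
            t ^ 2 * (x1 - 1) * (x2 - 1) * (x3 - 1) * ((t - 1) ^ 2 * (1 * x2 * x3))) /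
            ((t - 1) ^ 2 * (x1 * x2 * x3)) ^ 2,
          (1 * (x2 - t) * (x3 - t) * ((t - 1) ^ 2 * (x1 * x2 * x3)) -
            (x1 - t) * (x2 - t) * (x3 - t) * ((t - 1) ^ 2 * (1 * x2 * x3))) /
            ((t - 1) ^ 2 * (x1 * x2 * x3)) ^ 2) : ℝ × ℝ) +
      (x2 * (x2 - 1) * (x2 - t) / ((x2 - x1) * (x2 - x3))) •
        (((t ^ 2 * (x1 - 1) * 1 * (x3 - 1) * ((t - 1) ^ 2 * (x1 * x2 * x3)) -
            t ^ 2 * (x1 - 1) * (x2 - 1) * (x3 - 1) * ((t - 1) ^ 2 * (x1 * 1 * x3))) /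
            ((t - 1) ^ 2 * (x1 * x2 * x3)) ^ 2,
          ((x1 - t) * 1 * (x3 - t) * ((t - 1) ^ 2 * (x1 * x2 * x3)) -
            (x1 - t) * (x2 - t) * (x3 - t) * ((t - 1) ^ 2 * (x1 * 1 * x3))) /
            ((t - 1) ^ 2 * (x1 * x2 * x3)) ^ 2) : ℝ × ℝ) +
      (x3 * (x3 - 1) * (x3 - t) / ((x3 - x1) * (x3 - x2))) •
        (((t ^ 2 * (x1 - 1) * (x2 - 1) * 1 * ((t - 1) ^ 2 * (x1 * x2 * x3)) -
            t ^ 2 * (x1 - 1) * (x2 - 1) * (x3 - 1) * ((t - 1) ^ 2 * (x1 * x2 * 1))) /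
            ((t - 1) ^ 2 * (x1 * x2 * x3)) ^ 2,
          ((x1 - t) * (x2 - t) * 1 * ((t - 1) ^ 2 * (x1 * x2 * x3)) -
            (x1 - t) * (x2 - t) * (x3 - t) * ((t - 1) ^ 2 * (x1 * x2 * 1))) /
            ((t - 1) ^ 2 * (x1 * x2 * x3)) ^ 2) : ℝ × ℝ) = (0 : ℝ × ℝ) := by
    simp only [Prod.smul_mk, smul_eq_mul, Prod.mk_add_mk, Prod.mk_eq_zero]
    exact ⟨hA, hB⟩
  have hφ := congrArg (fun w => φ w) hvec
  simp only [map_add, map_smul, smul_eq_mul, map_zero] at hφ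
  have hXY : (x1 * x2 * x3) ^ (s - 1) * (x1 * x2 * x3) = (x1 * x2 * x3) ^ s := by
    rw [← Real.rpow_add_one hP, sub_add_cancel]
  linear_combination
    (s * F (t ^ 2 * (x1 - 1) * (x2 - 1) * (x3 - 1) / ((t - 1) ^ 2 * (x1 * x2 * x3)),
        (x1 - t) * (x2 - t) * (x3 - t) / ((t - 1) ^ 2 * (x1 * x2 * x3))) *
      (x1 * x2 * x3) ^ (s - 1)) * key1 +
    (x1 * x2 * x3) ^ s * hφ +
    (s * F (t ^ 2 * (x1 - 1) * (x2 - 1) * (x3 - 1) / ((t - 1) ^ 2 * (x1 * x2 * x3)),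
        (x1 - t) * (x2 - t) * (x3 - t) / ((t - 1) ^ 2 * (x1 * x2 * x3)))) * hXY
end

section
/- Let α, β ∈ ℝ and let φ : (0,∞) × (0,∞) → [0,∞] be a measurable function satisfying the homogeneity φ(q·A, B/q) = q^{β-α} φ(A,B) for all q, A, B > 0. Then the (Lebesgue) integrals in [0,∞] satisfy: ∫_{(0,∞)^2} (A+B)^{α+β} φ(A,B) dA dB = ( ∫_0^∞ u^β φ(1,u) du ) · ( ∫_0^∞ (1+v^2)^{α+β} v^{-2α-1} dv ). -/
open MeasureTheory

lemma lintegral_Ioi_scale {c : ℝ} (hc : 0 < c) (f : ℝ → ENNReal) (hf : Measurable f) :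
    ∫⁻ x in Set.Ioi (0:ℝ), f (c * x) = ENNReal.ofReal c⁻¹ * ∫⁻ x in Set.Ioi (0:ℝ), f x := by
  have hpre : (fun x : ℝ => c * x) ⁻¹' (Set.Ioi 0) = Set.Ioi 0 := by
    ext x
    simp only [Set.mem_preimage, Set.mem_Ioi]
    exact mul_pos_iff_of_pos_left hc
  have hmap : Measure.map (fun x : ℝ => c * x) (volume.restrict (Set.Ioi 0))
      = ENNReal.ofReal c⁻¹ • volume.restrict (Set.Ioi 0) := by
    conv_lhs => rw [← hpre]
    rw [← Measure.restrict_map (measurable_const_mul c) measurableSet_Ioi,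
      Real.map_volume_mul_left hc.ne', Measure.restrict_smul,
      abs_of_pos (inv_pos.2 hc)]
  calc ∫⁻ x in Set.Ioi (0:ℝ), f (c * x)
      = ∫⁻ y, f y ∂(Measure.map (fun x : ℝ => c * x) (volume.restrict (Set.Ioi 0))) :=
        (lintegral_map hf (measurable_const_mul c)).symm
    _ = ENNReal.ofReal c⁻¹ * ∫⁻ x in Set.Ioi (0:ℝ), f x := by
        rw [hmap, lintegral_smul_measure, smul_eq_mul]

lemma aux_pow (α β u v : ℝ) (hu : 0 < u) (hv : 0 < v) :
    (Real.sqrt u * v)⁻¹ * ((Real.sqrt u * v + u / (Real.sqrt u * v)) ^ (α + β)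
      * (Real.sqrt u * v) ^ (β - α))
    = (Real.sqrt u)⁻¹ * (u ^ β * ((1 + v ^ 2) ^ (α + β) * v ^ (-2 * α - 1))) := by
  set c := Real.sqrt u with hcdef
  have hc : 0 < c := Real.sqrt_pos.2 hu
  have hc2 : c ^ 2 = u := Real.sq_sqrt hu.le
  rw [← hc2]
  have h1 : c * v + c ^ 2 / (c * v) = (c / v) * (1 + v ^ 2) := by
    field_simp; ring
  rw [h1]
  have h2 : 0 < 1 + v ^ 2 := by positivity
  have hL : 0 < (c * v)⁻¹ * ((c / v * (1 + v ^ 2)) ^ (α + β) * (c * v) ^ (β - α)) := by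
    positivity
  have hR : 0 < c⁻¹ * ((c ^ 2) ^ β * ((1 + v ^ 2) ^ (α + β) * v ^ (-2 * α - 1))) := by
    positivity
  rw [← Real.exp_log hL, ← Real.exp_log hR]
  congr 1
  rw [Real.log_mul (by positivity) (by positivity), Real.log_mul (by positivity) (by positivity),
    Real.log_mul (by positivity) (by positivity), Real.log_mul (by positivity) (by positivity),
    Real.log_rpow (by positivity), Real.log_rpow (by positivity), Real.log_rpow (by positivity),
    Real.log_inv, Real.log_inv, Real.log_mul hc.ne' hv.ne',
    Real.log_mul (by positivity) h2.ne', Real.log_div hc.ne' hv.ne', Real.log_pow,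
    Real.log_mul (by positivity) (by positivity), Real.log_rpow h2, Real.log_rpow hv]
  push_cast
  ring

/-- Section 2.4: for a measurable `φ : (0,∞)² → [0,∞]` with the homogeneity
`φ(qA, B/q) = q^{β-α} φ(A,B)`, one has
`∫∫ (A+B)^{α+β} φ(A,B) dA dB = (∫ u^β φ(1,u) du) · (∫ (1+v²)^{α+β} v^{-2α-1} dv)`. -/
theorem euler_integral_factorization (α β : ℝ) (φ : ℝ × ℝ → ENNReal)
    (hφ : Measurable φ)
    (hhom : ∀ q A B : ℝ, 0 < q → 0 < A → 0 < B →
      φ (q * A, B / q) = ENNReal.ofReal (q ^ (β - α)) * φ (A, B)) :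
    ∫⁻ p in (Set.Ioi (0:ℝ) ×ˢ Set.Ioi (0:ℝ)),
        ENNReal.ofReal ((p.1 + p.2) ^ (α + β)) * φ p =
      (∫⁻ u in Set.Ioi (0:ℝ), ENNReal.ofReal (u ^ β) * φ (1, u)) *
        ∫⁻ v in Set.Ioi (0:ℝ), ENNReal.ofReal ((1 + v ^ 2) ^ (α + β) * v ^ (-2 * α - 1)) := by
  set I2 := ∫⁻ v in Set.Ioi (0:ℝ),
      ENNReal.ofReal ((1 + v ^ 2) ^ (α + β) * v ^ (-2 * α - 1)) with hI2
  have mφ1 : Measurable fun u : ℝ => φ (1, u) :=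
    hφ.comp (measurable_const.prodMk measurable_id)
  -- the function after substituting the homogeneity
  set g : ℝ × ℝ → ENNReal := fun p =>
    ENNReal.ofReal ((p.1 + p.2) ^ (α + β)) *
      (ENNReal.ofReal (p.1 ^ (β - α)) * φ (1, p.1 * p.2)) with hg
  have mg : Measurable g := by
    apply Measurable.mul
    · exact ((measurable_fst.add measurable_snd).pow measurable_const).ennreal_ofReal
    · exact ((measurable_fst.pow measurable_const).ennreal_ofReal).mul
        (mφ1.comp (measurable_fst.mul measurable_snd))
  have hprodmeas : MeasurableSet (Set.Ioi (0:ℝ) ×ˢ Set.Ioi (0:ℝ)) :=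
    measurableSet_Ioi.prod measurableSet_Ioi
  have step1 : ∫⁻ p in (Set.Ioi (0:ℝ) ×ˢ Set.Ioi (0:ℝ)),
      ENNReal.ofReal ((p.1 + p.2) ^ (α + β)) * φ p
      = ∫⁻ p in (Set.Ioi (0:ℝ) ×ˢ Set.Ioi (0:ℝ)), g p := by
    apply setLIntegral_congr_fun hprodmeas
    rintro ⟨A, B⟩ hp
    have hA : 0 < A := hp.1
    have hB : 0 < B := hp.2
    have h := hhom A 1 (A * B) hA one_pos (mul_pos hA hB)
    rw [mul_one, mul_div_cancel_left₀ _ hA.ne'] at h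
    simp only [hg, h]
  rw [step1]
  have hrestr : (volume : Measure (ℝ × ℝ)).restrict (Set.Ioi (0:ℝ) ×ˢ Set.Ioi (0:ℝ))
      = (volume.restrict (Set.Ioi (0:ℝ))).prod (volume.restrict (Set.Ioi (0:ℝ))) := by
    rw [Measure.volume_eq_prod, Measure.prod_restrict]
  rw [hrestr, lintegral_prod _ mg.aemeasurable]
  -- inner substitution B = u / A
  have step3 : ∀ A : ℝ, A ∈ Set.Ioi (0:ℝ) →
      (∫⁻ B in Set.Ioi (0:ℝ), g (A, B))
      = ∫⁻ u in Set.Ioi (0:ℝ), ENNReal.ofReal A⁻¹ *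
          (ENNReal.ofReal ((A + u / A) ^ (α + β)) *
            (ENNReal.ofReal (A ^ (β - α)) * φ (1, u))) := by
    intro A hA
    rw [Set.mem_Ioi] at hA
    set F : ℝ → ENNReal := fun u =>
      ENNReal.ofReal ((A + u / A) ^ (α + β)) *
        (ENNReal.ofReal (A ^ (β - α)) * φ (1, u)) with hF
    have mF : Measurable F := by
      apply Measurable.mul
      · exact ((measurable_const.add (measurable_id.div_const A)).pow
          measurable_const).ennreal_ofReal
      · exact measurable_const.mul mφ1
    have hcomp : ∀ B : ℝ, g (A, B) = F (A * B) := by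
      intro B
      simp only [hg, hF, mul_div_cancel_left₀ _ hA.ne']
    calc (∫⁻ B in Set.Ioi (0:ℝ), g (A, B))
        = ∫⁻ B in Set.Ioi (0:ℝ), F (A * B) := lintegral_congr fun B => hcomp B
      _ = ENNReal.ofReal A⁻¹ * ∫⁻ u in Set.Ioi (0:ℝ), F u := lintegral_Ioi_scale hA F mF
      _ = ∫⁻ u in Set.Ioi (0:ℝ), ENNReal.ofReal A⁻¹ * F u :=
          (lintegral_const_mul _ mF).symm
  rw [setLIntegral_congr_fun measurableSet_Ioi step3]
  -- swap the order of integration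
  set H : ℝ → ℝ → ENNReal := fun A u => ENNReal.ofReal A⁻¹ *
      (ENNReal.ofReal ((A + u / A) ^ (α + β)) *
        (ENNReal.ofReal (A ^ (β - α)) * φ (1, u))) with hH
  have mH : Measurable (Function.uncurry H) := by
    apply Measurable.mul
    · exact (measurable_fst.inv).ennreal_ofReal
    · apply Measurable.mul
      · exact ((measurable_fst.add (measurable_snd.div measurable_fst)).pow
          measurable_const).ennreal_ofReal
      · exact ((measurable_fst.pow measurable_const).ennreal_ofReal).mul
          (mφ1.comp measurable_snd)
  rw [lintegral_lintegral_swap mH.aemeasurable]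
  -- inner integral over A
  have step5 : ∀ u : ℝ, u ∈ Set.Ioi (0:ℝ) →
      (∫⁻ A in Set.Ioi (0:ℝ), H A u)
      = (ENNReal.ofReal (u ^ β) * φ (1, u)) * I2 := by
    intro u hu
    rw [Set.mem_Ioi] at hu
    set f : ℝ → ENNReal := fun A =>
      ENNReal.ofReal (A⁻¹ * ((A + u / A) ^ (α + β) * A ^ (β - α))) with hf
    have mf : Measurable f := by
      apply Measurable.ennreal_ofReal
      exact (measurable_inv).mul
        (((measurable_id.add (measurable_const.div measurable_id)).pow
          measurable_const).mul (measurable_id.pow measurable_const))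
    have e1 : ∀ A ∈ Set.Ioi (0:ℝ), H A u = f A * φ (1, u) := by
      intro A hA
      rw [Set.mem_Ioi] at hA
      have h1 : (0:ℝ) ≤ (A + u / A) ^ (α + β) := (Real.rpow_pos_of_pos (by positivity) _).le
      rw [hH, hf]
      simp only
      rw [ENNReal.ofReal_mul (by positivity), ENNReal.ofReal_mul h1]
      ring
    rw [setLIntegral_congr_fun measurableSet_Ioi e1,
      lintegral_mul_const _ mf]
    -- now compute ∫ f via v-substitution
    have hsq : 0 < Real.sqrt u := Real.sqrt_pos.2 hu
    have hscale := lintegral_Ioi_scale hsq f mf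
    have e2 : (∫⁻ v in Set.Ioi (0:ℝ), f (Real.sqrt u * v))
        = ENNReal.ofReal (Real.sqrt u)⁻¹ * (ENNReal.ofReal (u ^ β) * I2) := by
      have e3 : ∀ v ∈ Set.Ioi (0:ℝ), f (Real.sqrt u * v)
          = ENNReal.ofReal (Real.sqrt u)⁻¹ * (ENNReal.ofReal (u ^ β) *
              ENNReal.ofReal ((1 + v ^ 2) ^ (α + β) * v ^ (-2 * α - 1))) := by
        intro v hv
        rw [Set.mem_Ioi] at hv
        rw [hf]
        simp only
        rw [aux_pow α β u v hu hv,
          ENNReal.ofReal_mul (by positivity), ENNReal.ofReal_mul (by positivity)]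
      have m3 : Measurable fun v : ℝ =>
          ENNReal.ofReal ((1 + v ^ 2) ^ (α + β) * v ^ (-2 * α - 1)) :=
        (((measurable_const.add (measurable_id.pow measurable_const)).pow
          measurable_const).mul (measurable_id.pow measurable_const)).ennreal_ofReal
      rw [setLIntegral_congr_fun measurableSet_Ioi e3,
        lintegral_const_mul _ (m3.const_mul _),
        lintegral_const_mul _ m3]
    rw [e2] at hscale
    have hcancel : (∫⁻ A in Set.Ioi (0:ℝ), f A) = ENNReal.ofReal (u ^ β) * I2 :=
      (ENNReal.mul_right_inj (by simp [hsq, inv_pos.2 hsq]) ENNReal.ofReal_ne_top).mp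
        hscale.symm
    rw [hcancel]
    ring
  have m2 : Measurable fun u : ℝ => ENNReal.ofReal (u ^ β) * φ (1, u) :=
    ((measurable_id.pow measurable_const).ennreal_ofReal).mul mφ1
  rw [setLIntegral_congr_fun measurableSet_Ioi step5,
    lintegral_mul_const _ m2]
end
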